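/- arXiv:2104.11625 — 10 statements merged into one kernel-verified Lean document; each statement's English description precedes it below -/
import Mathlib

section
/- Let λ > 1, a* > 1, C ≥ 0 be real numbers, X a topological space, f : X → X continuous, and a, b : X → ℝ continuous functions with a(x) ≥ a* and |b(x)| ≤ C for all x ∈ X. Then the series S(x) := ∑_{i=0}^∞ λ^{−i} b(f^i(x)) ∏_{j=0}^{i} a(f^j(x))⁻¹ converges absolutely and uniformly on X, its sum S is a continuous function, and |S(x)| ≤ C·λa*/(λa* − 1) for every x ∈ X. -/
/-- Under `λ > 1`, `a ≥ a* > 1`, `|b| ≤ C`, the stable series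
`S(x) = ∑_{i=0}^∞ λ^{−i} b(f^i(x)) ∏_{j=0}^{i} a(f^j(x))⁻¹` converges absolutely,
its partial sums converge uniformly on `X`, the sum `S` is continuous, and
`|S(x)| ≤ C·λa*/(λa* − 1)`. -/
theorem stable_series_converges {X : Type*} [TopologicalSpace X]
    (lam astar C : ℝ) (hlam : 1 < lam) (hastar : 1 < astar) (hC : 0 ≤ C)
    (f : X → X) (hf : Continuous f)
    (a b : X → ℝ) (ha_cont : Continuous a) (hb_cont : Continuous b)
    (ha : ∀ x, astar ≤ a x) (hb : ∀ x, |b x| ≤ C)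
    (s : ℕ → X → ℝ)
    (hs : ∀ i x, s i x =
      (lam⁻¹) ^ i * b (f^[i] x) * ∏ j ∈ Finset.range (i + 1), (a (f^[j] x))⁻¹)
    (S : X → ℝ) (hS : ∀ x, S x = ∑' i, s i x) :
    (∀ x, Summable (fun i => |s i x|)) ∧
    TendstoUniformly (fun n x => ∑ i ∈ Finset.range n, s i x) S Filter.atTop ∧
    Continuous S ∧
    (∀ x, |S x| ≤ C * (lam * astar) / (lam * astar - 1)) := by
  have hlam0 : (0:ℝ) < lam := lt_trans one_pos hlam
  have hast0 : (0:ℝ) < astar := lt_trans one_pos hastar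
  have hapos : ∀ x, (0:ℝ) < a x := fun x => lt_of_lt_of_le hast0 (ha x)
  have hla1 : (1:ℝ) < lam * astar := by nlinarith
  have hla0 : (0:ℝ) < lam * astar := lt_trans one_pos hla1
  set r : ℝ := (lam * astar)⁻¹ with hr
  have hr0 : 0 ≤ r := inv_nonneg.2 hla0.le
  have hr1 : r < 1 := by
    rw [hr, inv_lt_one_iff₀]; right; exact hla1
  set u : ℕ → ℝ := fun i => C * r ^ i with hu_def
  have hu : Summable u := (summable_geometric_of_lt_one hr0 hr1).mul_left C
  have hbound' : ∀ i x, |s i x| ≤ u i := by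
    intro i x
    rw [hs, abs_mul, abs_mul, abs_pow, abs_inv,
      abs_of_pos hlam0]
    have hprod : |∏ j ∈ Finset.range (i + 1), (a (f^[j] x))⁻¹|
        ≤ (astar⁻¹) ^ i := by
      rw [Finset.abs_prod]
      calc ∏ j ∈ Finset.range (i + 1), |(a (f^[j] x))⁻¹|
          ≤ ∏ j ∈ Finset.range (i + 1), astar⁻¹ := by
            apply Finset.prod_le_prod
            · intro j _; exact abs_nonneg _
            · intro j _
              rw [abs_inv, abs_of_pos (hapos _)]
              exact inv_anti₀ hast0 (ha _)
        _ = (astar⁻¹) ^ (i + 1) := by rw [Finset.prod_const, Finset.card_range]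
        _ ≤ (astar⁻¹) ^ i := by
            apply pow_le_pow_of_le_one (inv_nonneg.2 hast0.le)
              (inv_le_one_of_one_le₀ hastar.le)
            omega
    calc lam⁻¹ ^ i * |b (f^[i] x)| * |∏ j ∈ Finset.range (i + 1), (a (f^[j] x))⁻¹|
        ≤ lam⁻¹ ^ i * C * (astar⁻¹) ^ i := by
          apply mul_le_mul
          · exact mul_le_mul_of_nonneg_left (hb _) (pow_nonneg (inv_nonneg.2 hlam0.le) i)
          · exact hprod
          · exact abs_nonneg _
          · positivity
      _ = C * r ^ i := by
          rw [hr, mul_inv, mul_pow]; ring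
  have hbound : ∀ i x, ‖s i x‖ ≤ u i := by
    intro i x; rw [Real.norm_eq_abs]; exact hbound' i x
  have habs : ∀ x, Summable fun i => |s i x| := by
    intro x
    exact Summable.of_nonneg_of_le (fun i => abs_nonneg _)
      (fun i => hbound' i x) hu
  have hsum : ∀ x, Summable fun i => s i x := fun x => (habs x).of_abs
  have hSfun : S = fun x => ∑' i, s i x := funext hS
  have hTU : TendstoUniformly (fun n x => ∑ i ∈ Finset.range n, s i x) S
      Filter.atTop := by
    rw [hSfun]; exact tendstoUniformly_tsum_nat hu hbound
  have hscont : ∀ i, Continuous (s i) := by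
    intro i
    have : Continuous fun x =>
        (lam⁻¹) ^ i * b (f^[i] x) * ∏ j ∈ Finset.range (i + 1), (a (f^[j] x))⁻¹ := by
      apply Continuous.mul
      · exact continuous_const.mul (hb_cont.comp (hf.iterate i))
      · apply continuous_finset_prod
        intro j _
        exact (ha_cont.comp (hf.iterate j)).inv₀ fun x => (hapos _).ne'
    convert this using 1
    funext x; exact hs i x
  have hScont : Continuous S := by
    rw [hSfun]
    exact continuous_tsum hscont hu hbound
  refine ⟨habs, hTU, hScont, fun x => ?_⟩
  have h1 : |S x| ≤ ∑' i, u i := by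
    rw [hS]
    calc |∑' i, s i x| = ‖∑' i, s i x‖ := (Real.norm_eq_abs _).symm
      _ ≤ ∑' i, ‖s i x‖ := norm_tsum_le_tsum_norm
            (by simp only [Real.norm_eq_abs]; exact habs x)
      _ = ∑' i, |s i x| := by simp only [Real.norm_eq_abs]
      _ ≤ ∑' i, u i := Summable.tsum_le_tsum (fun i => hbound' i x) (habs x) hu
  have h2 : ∑' i, u i = C * (lam * astar) / (lam * astar - 1) := by
    rw [hu_def, tsum_mul_left, tsum_geometric_of_lt_one hr0 hr1, hr]
    rw [eq_div_iff (by intro h; nlinarith : lam * astar - 1 ≠ 0)]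
    field_simp
    rw [mul_div_assoc, div_self (by intro h; nlinarith : lam * astar - 1 ≠ 0), mul_one]
  linarith [h1, h2.symm.le, h2.le]
end

section
/- Let λ > 1, a* > 1, C ≥ 0 be real numbers, X a set, f : X → X, and a, b : X → ℝ functions with a(x) ≥ a* and |b(x)| ≤ C for all x ∈ X, and let S(x) := ∑_{i=0}^∞ λ^{−i} b(f^i(x)) ∏_{j=0}^{i} a(f^j(x))⁻¹ (the series converges absolutely). Then for every x ∈ X one has a(x)·S(x) − b(x) = λ⁻¹·S(f(x)). Equivalently, writing M(x) for the matrix [[a(x), b(x)], [0, λ⁻¹]] and w(x) := (−S(x), 1) ∈ ℝ², one has M(x)·w(x) = λ⁻¹·w(f(x)), and consequently for every n ≥ 1, M(f^{n−1}(x))···M(f(x))·M(x)·w(x) = λ^{−n}·w(f^n(x)). -/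
/-- The stable series `S` satisfies the invariance equation
`a(x)·S(x) − b(x) = λ⁻¹·S(f(x))`; equivalently, with `M(x) = [[a x, b x],[0, λ⁻¹]]`
and `w(x) = (−S(x), 1)`, one has `M(x)·w(x) = λ⁻¹·w(f(x))`, and for every `n ≥ 1`
the cocycle product contracts: `M(f^{n−1}x)···M(x)·w(x) = λ^{−n}·w(f^n x)`. -/
theorem stable_series_invariance {X : Type*}
    (lam astar C : ℝ) (hlam : 1 < lam) (hastar : 1 < astar) (hC : 0 ≤ C)
    (f : X → X) (a b : X → ℝ)
    (ha : ∀ x, astar ≤ a x) (hb : ∀ x, |b x| ≤ C)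
    (S : X → ℝ)
    (hS : ∀ x, S x = ∑' i,
      (lam⁻¹) ^ i * b (f^[i] x) * ∏ j ∈ Finset.range (i + 1), (a (f^[j] x))⁻¹)
    (M : X → Matrix (Fin 2) (Fin 2) ℝ)
    (hM : ∀ x, M x = !![a x, b x; 0, lam⁻¹])
    (w : X → Fin 2 → ℝ) (hw : ∀ x, w x = ![-S x, 1]) :
    (∀ x, Summable (fun i =>
      |(lam⁻¹) ^ i * b (f^[i] x) * ∏ j ∈ Finset.range (i + 1), (a (f^[j] x))⁻¹|)) ∧
    (∀ x, a x * S x - b x = lam⁻¹ * S (f x)) ∧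
    (∀ x, (M x).mulVec (w x) = lam⁻¹ • w (f x)) ∧
    (∀ x, ∀ n : ℕ, 1 ≤ n →
      (((List.range n).reverse.map (fun i => M (f^[i] x))).prod).mulVec (w x)
        = (lam⁻¹) ^ n • w (f^[n] x)) := by
  have hlam0 : (0:ℝ) < lam := lt_trans one_pos hlam
  have hastar0 : (0:ℝ) < astar := lt_trans one_pos hastar
  have hapos : ∀ x, (0:ℝ) < a x := fun x => lt_of_lt_of_le hastar0 (ha x)
  set t : X → ℕ → ℝ := fun x i =>
    (lam⁻¹) ^ i * b (f^[i] x) * ∏ j ∈ Finset.range (i + 1), (a (f^[j] x))⁻¹ with ht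
  -- summability
  have hsumabs : ∀ x, Summable (fun i => |t x i|) := by
    intro x
    have hr0 : (0:ℝ) ≤ lam⁻¹ * astar⁻¹ := by positivity
    have hr1 : lam⁻¹ * astar⁻¹ < 1 := by
      calc lam⁻¹ * astar⁻¹ < 1 * 1 := by
            apply mul_lt_mul' (le_of_lt _) _ (by positivity) one_pos
            · exact inv_lt_one_of_one_lt₀ hlam
            · exact inv_lt_one_of_one_lt₀ hastar
        _ = 1 := by ring
    have hg : Summable (fun i : ℕ => (C * astar⁻¹) * (lam⁻¹ * astar⁻¹) ^ i) :=
      (summable_geometric_of_lt_one hr0 hr1).mul_left _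
    refine Summable.of_nonneg_of_le (fun i => abs_nonneg _) (fun i => ?_) hg
    have hprod : (∏ j ∈ Finset.range (i + 1), (a (f^[j] x))⁻¹)
        ≤ ∏ j ∈ Finset.range (i + 1), astar⁻¹ := by
      apply Finset.prod_le_prod
      · intro j _; exact le_of_lt (inv_pos.mpr (hapos _))
      · intro j _; exact inv_anti₀ hastar0 (ha _)
    have hprodpos : (0:ℝ) < ∏ j ∈ Finset.range (i + 1), (a (f^[j] x))⁻¹ := by
      apply Finset.prod_pos; intro j _; exact inv_pos.mpr (hapos _)
    rw [abs_mul, abs_mul, abs_pow, abs_of_pos (inv_pos.mpr hlam0),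
      abs_of_pos hprodpos]
    rw [Finset.prod_const, Finset.card_range] at hprod
    calc lam⁻¹ ^ i * |b (f^[i] x)| * (∏ j ∈ Finset.range (i + 1), (a (f^[j] x))⁻¹)
        ≤ lam⁻¹ ^ i * C * astar⁻¹ ^ (i + 1) := by
          apply mul_le_mul (mul_le_mul le_rfl (hb _) (abs_nonneg _) (by positivity))
            hprod (le_of_lt hprodpos) (by positivity)
      _ = (C * astar⁻¹) * (lam⁻¹ * astar⁻¹) ^ i := by ring
  have hsum : ∀ x, Summable (t x) := fun x => (hsumabs x).of_abs
  -- shift identity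
  have hshift : ∀ x i, t x (i + 1) = (lam⁻¹ * (a x)⁻¹) * t (f x) i := by
    intro x i
    simp only [ht]
    rw [Finset.prod_range_succ']
    have hiter : ∀ j, f^[j + 1] x = f^[j] (f x) := fun j =>
      Function.iterate_succ_apply f j x
    rw [show (∏ j ∈ Finset.range (i + 1), (a (f^[j + 1] x))⁻¹)
        = ∏ j ∈ Finset.range (i + 1), (a (f^[j] (f x)))⁻¹ from by
      apply Finset.prod_congr rfl; intro j _; rw [hiter]]
    rw [hiter i, Function.iterate_zero_apply]
    ring
  -- functional equation
  have hfe : ∀ x, a x * S x - b x = lam⁻¹ * S (f x) := by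
    intro x
    have h0 : S x = t x 0 + ∑' i, t x (i + 1) := by
      rw [hS x, Summable.tsum_eq_zero_add (hsum x)]
    have h1 : (∑' i, t x (i + 1)) = (lam⁻¹ * (a x)⁻¹) * S (f x) := by
      rw [hS (f x)]
      rw [show (fun i => t x (i + 1)) = fun i => (lam⁻¹ * (a x)⁻¹) * t (f x) i from
        funext fun i => hshift x i]
      exact tsum_mul_left
    have ht0 : t x 0 = b x * (a x)⁻¹ := by
      simp [ht]
    have hane : a x ≠ 0 := ne_of_gt (hapos x)
    rw [h0, ht0, h1]
    field_simp
    ring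
  -- matrix equation
  have hmat : ∀ x, (M x).mulVec (w x) = lam⁻¹ • w (f x) := by
    intro x
    rw [hM, hw, hw]
    funext i
    fin_cases i
    · simp [Matrix.mulVec, dotProduct, Fin.sum_univ_two]
      have := hfe x
      nlinarith [hfe x]
    · simp [Matrix.mulVec, dotProduct, Fin.sum_univ_two]
  refine ⟨hsumabs, hfe, hmat, ?_⟩
  intro x n hn
  clear hn hS hw hM
  induction n with
  | zero => simp
  | succ n ih =>
    rw [List.range_succ, List.reverse_append]
    simp only [List.reverse_singleton, List.map_cons, List.map_append,
      List.singleton_append, List.prod_cons]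
    rw [← Matrix.mulVec_mulVec, ih, Matrix.mulVec_smul, hmat (f^[n] x),
      ← Function.iterate_succ_apply' f n x, smul_smul, pow_succ]
end

section
/- Let λ > 0 and a* > 0 be real numbers with λ·a* > 1, let X be a set, f : X → X a map, and a : X → ℝ a function with a(x) ≥ a* for all x. If D : X → ℝ is a bounded function satisfying a(x)·D(x) = λ⁻¹·D(f(x)) for every x ∈ X, then D is identically zero. -/
/-- If `λ > 0`, `a* > 0` with `λ·a* > 1`, `a(x) ≥ a*` for all `x`,
and `D` is a bounded function satisfying the cohomological equation
`a(x)·D(x) = λ⁻¹·D(f(x))`, then `D ≡ 0`. -/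
theorem bounded_cohomological_solution_zero {X : Type*}
    (lam astar : ℝ) (hlam : 0 < lam) (hastar : 0 < astar) (h1 : 1 < lam * astar)
    (f : X → X) (a : X → ℝ) (ha : ∀ x, astar ≤ a x)
    (D : X → ℝ) (hD_bdd : ∃ M : ℝ, ∀ x, |D x| ≤ M)
    (hD : ∀ x, a x * D x = lam⁻¹ * D (f x)) :
    ∀ x, D x = 0 := by
  obtain ⟨M, hM⟩ := hD_bdd
  -- key step inequality
  have key : ∀ y, (lam * astar) * |D y| ≤ |D (f y)| := by
    intro y
    have h := hD y
    have hDf : D (f y) = lam * (a y * D y) := by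
      field_simp at h ⊢; linarith [h]
    rw [hDf, abs_mul, abs_mul, abs_of_pos hlam]
    have h1' : astar * |D y| ≤ |a y| * |D y| := by
      apply mul_le_mul_of_nonneg_right _ (abs_nonneg _)
      exact le_trans (ha y) (le_abs_self _)
    nlinarith [abs_nonneg (D y)]
  have iter : ∀ n x, (lam * astar) ^ n * |D x| ≤ |D (f^[n] x)| := by
    intro n
    induction n with
    | zero => intro x; simp
    | succ n ih =>
      intro x
      have h2 := key (f^[n] x)
      have h3 := ih x
      have hpos : 0 < lam * astar := by positivity
      calc (lam * astar) ^ (n+1) * |D x| = (lam * astar) * ((lam * astar) ^ n * |D x|) := by ring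
        _ ≤ (lam * astar) * |D (f^[n] x)| := by nlinarith
        _ ≤ |D (f^[n+1] x)| := by rw [Function.iterate_succ_apply']; exact h2
  intro x
  by_contra hne
  have hposD : 0 < |D x| := abs_pos.mpr hne
  obtain ⟨n, hn⟩ := pow_unbounded_of_one_lt (M / |D x|) h1
  have := iter n x
  have := hM (f^[n] x)
  have : (lam * astar) ^ n ≤ M / |D x| := by
    rw [le_div_iff₀ hposD]; linarith
  linarith
end

section
/- Let λ > 1, a* > 1, L > 0 be real numbers with L < λ·a*. Let X be a compact metric space, f : X → X a Lipschitz map with Lipschitz constant at most L, and a, b : X → ℝ Lipschitz functions with a(x) ≥ a* for all x ∈ X. Then the function S(x) := ∑_{i=0}^∞ λ^{−i} b(f^i(x)) ∏_{j=0}^{i} a(f^j(x))⁻¹ is Lipschitz continuous on X. -/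
open NNReal

lemma prod_sub_prod_aux (c : ℝ) (p q d : ℕ → ℝ)
    (hp0 : ∀ j, 0 ≤ p j) (hq0 : ∀ j, 0 ≤ q j)
    (hpc : ∀ j, p j ≤ c) (hqc : ∀ j, q j ≤ c)
    (hd : ∀ j, |p j - q j| ≤ d j) (n : ℕ) :
    |∏ j ∈ Finset.range (n + 1), p j - ∏ j ∈ Finset.range (n + 1), q j| ≤
      ∑ j ∈ Finset.range (n + 1), c ^ n * d j := by
  induction n with
  | zero => simpa using hd 0
  | succ n ih =>
    have hc : 0 ≤ c := le_trans (hp0 0) (hpc 0)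
    rw [Finset.prod_range_succ p, Finset.prod_range_succ q]
    set A := ∏ j ∈ Finset.range (n + 1), p j with hA
    set B := ∏ j ∈ Finset.range (n + 1), q j with hB
    have hA0 : 0 ≤ A := Finset.prod_nonneg fun j _ => hp0 j
    have hB0 : 0 ≤ B := Finset.prod_nonneg fun j _ => hq0 j
    have hBc : B ≤ c ^ (n + 1) := by
      calc B ≤ ∏ _j ∈ Finset.range (n + 1), c :=
            Finset.prod_le_prod (fun j _ => hq0 j) (fun j _ => hqc j)
        _ = c ^ (n + 1) := by simp
    have key : |A * p (n + 1) - B * q (n + 1)| ≤ |A - B| * c + c ^ (n + 1) * d (n + 1) := by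
      have hrw : A * p (n + 1) - B * q (n + 1)
          = (A - B) * p (n + 1) + B * (p (n + 1) - q (n + 1)) := by ring
      rw [hrw]
      refine (abs_add_le _ _).trans ?_
      rw [abs_mul, abs_mul]
      have h1 : |A - B| * |p (n + 1)| ≤ |A - B| * c :=
        mul_le_mul_of_nonneg_left (by rw [abs_of_nonneg (hp0 _)]; exact hpc _) (abs_nonneg _)
      have h2 : |B| * |p (n + 1) - q (n + 1)| ≤ c ^ (n + 1) * d (n + 1) :=
        mul_le_mul (by rw [abs_of_nonneg hB0]; exact hBc) (hd _) (abs_nonneg _) (by positivity)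
      linarith
    refine key.trans ?_
    rw [Finset.sum_range_succ]
    have h2 : |A - B| * c ≤ ∑ j ∈ Finset.range (n + 1), c ^ (n + 1) * d j := by
      calc |A - B| * c ≤ (∑ j ∈ Finset.range (n + 1), c ^ n * d j) * c :=
            mul_le_mul_of_nonneg_right ih hc
        _ = ∑ j ∈ Finset.range (n + 1), c ^ (n + 1) * d j := by
            rw [Finset.sum_mul]; exact Finset.sum_congr rfl fun j _ => by ring
    linarith

set_option maxHeartbeats 1000000 in
/-- If `λ > 1`, `a* > 1`, `0 < L < λ·a*`, `X` is a compact metric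
space, `f` is `L`-Lipschitz, `a, b` are Lipschitz with `a ≥ a*`, then the stable
series `S(x) = ∑_{i=0}^∞ λ^{−i} b(f^i(x)) ∏_{j=0}^{i} a(f^j(x))⁻¹` is Lipschitz
continuous on `X`. -/
theorem stable_series_lipschitz {X : Type*} [MetricSpace X] [CompactSpace X]
    (lam astar L : ℝ) (hlam : 1 < lam) (hastar : 1 < astar)
    (hL : 0 < L) (hLlt : L < lam * astar)
    (f : X → X) (hf : LipschitzWith (Real.toNNReal L) f)
    (a b : X → ℝ) (Ka Kb : ℝ≥0)
    (ha_lip : LipschitzWith Ka a) (hb_lip : LipschitzWith Kb b)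
    (ha : ∀ x, astar ≤ a x)
    (S : X → ℝ)
    (hS : ∀ x, S x = ∑' i,
      (lam⁻¹) ^ i * b (f^[i] x) * ∏ j ∈ Finset.range (i + 1), (a (f^[j] x))⁻¹) :
    ∃ K : ℝ≥0, LipschitzWith K S := by
  by_cases hX : Nonempty X
  swap
  · exact ⟨1, fun x y => (hX ⟨x⟩).elim⟩
  -- basic positivity
  have hl0 : (0:ℝ) < lam := lt_trans one_pos hlam
  have has0 : (0:ℝ) < astar := lt_trans one_pos hastar
  have hla1 : (1:ℝ) < lam * astar := by nlinarith
  have ha0 : ∀ z, 0 < a z := fun z => lt_of_lt_of_le has0 (ha z)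
  -- bound on b
  obtain ⟨B, hB0, hB⟩ : ∃ B : ℝ, 0 ≤ B ∧ ∀ x, |b x| ≤ B := by
    obtain ⟨B, hB⟩ := (isCompact_range (continuous_abs.comp hb_lip.continuous)).bddAbove
    have hB' : ∀ x, |b x| ≤ B := fun x => hB (Set.mem_range_self x)
    exact ⟨B, (abs_nonneg _).trans (hB' (Classical.arbitrary X)), hB'⟩
  set M : ℝ := max 1 L with hMdef
  have hM1 : (1:ℝ) ≤ M := le_max_left _ _
  have hML : L ≤ M := le_max_right _ _
  have hM0 : (0:ℝ) < M := lt_of_lt_of_le one_pos hM1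
  set r : ℝ := M / (lam * astar) with hrdef
  have hr0 : 0 ≤ r := by positivity
  have hr1 : r < 1 := (div_lt_one (by positivity)).2 (max_lt hla1 hLlt)
  -- the summands
  set g : ℕ → X → ℝ := fun i x =>
    (lam⁻¹) ^ i * b (f^[i] x) * ∏ j ∈ Finset.range (i + 1), (a (f^[j] x))⁻¹ with hgdef
  have hS' : ∀ x, S x = ∑' i, g i x := hS
  -- product bounds
  have hinv_le : ∀ z, (a z)⁻¹ ≤ astar⁻¹ := fun z =>
    inv_anti₀ has0 (ha z)
  have hinv0 : ∀ z, 0 ≤ (a z)⁻¹ := fun z => (inv_pos.2 (ha0 z)).le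
  have hP0 : ∀ i x, 0 ≤ ∏ j ∈ Finset.range (i + 1), (a (f^[j] x))⁻¹ := fun i x =>
    Finset.prod_nonneg fun j _ => hinv0 _
  have hPle : ∀ i x, ∏ j ∈ Finset.range (i + 1), (a (f^[j] x))⁻¹ ≤ astar⁻¹ ^ (i + 1) := by
    intro i x
    calc ∏ j ∈ Finset.range (i + 1), (a (f^[j] x))⁻¹
        ≤ ∏ _j ∈ Finset.range (i + 1), astar⁻¹ :=
          Finset.prod_le_prod (fun j _ => hinv0 _) (fun j _ => hinv_le _)
      _ = astar⁻¹ ^ (i + 1) := by simp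
  -- iterate Lipschitz bound
  have hfi : ∀ (i : ℕ) (x y : X), dist (f^[i] x) (f^[i] y) ≤ M ^ i * dist x y := by
    intro i x y
    have h := (hf.iterate i).dist_le_mul x y
    have hcoe : ((Real.toNNReal L ^ i : ℝ≥0) : ℝ) = L ^ i := by
      push_cast [Real.coe_toNNReal L hL.le]; ring
    rw [hcoe] at h
    refine h.trans ?_
    exact mul_le_mul_of_nonneg_right (pow_le_pow_left₀ hL.le hML i) dist_nonneg
  set C : ℝ := (Kb : ℝ) / astar + B * (Ka : ℝ) / astar ^ 2 with hCdef
  have hC0 : 0 ≤ C := by positivity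
  set c : ℕ → ℝ := fun i => C * ((i + 1 : ℝ) * r ^ i) with hcdef
  have hc0 : ∀ i, 0 ≤ c i := fun i => by positivity
  -- key termwise Lipschitz estimate
  have key : ∀ (i : ℕ) (x y : X), |g i x - g i y| ≤ c i * dist x y := by
    intro i x y
    set d := dist x y with hd
    have hd0 : 0 ≤ d := dist_nonneg
    set P := ∏ j ∈ Finset.range (i + 1), (a (f^[j] x))⁻¹ with hPd
    set Q := ∏ j ∈ Finset.range (i + 1), (a (f^[j] y))⁻¹ with hQd
    have hbdiff : |b (f^[i] x) - b (f^[i] y)| ≤ (Kb : ℝ) * (M ^ i * d) := by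
      have h1 := hb_lip.dist_le_mul (f^[i] x) (f^[i] y)
      rw [Real.dist_eq] at h1
      exact h1.trans (mul_le_mul_of_nonneg_left (hfi i x y) Kb.2)
    have hPQ : |P - Q| ≤ (i + 1 : ℝ) * (astar⁻¹ ^ i * ((Ka : ℝ) / astar ^ 2 * (M ^ i * d))) := by
      have hterm : ∀ j : ℕ, |(a (f^[j] x))⁻¹ - (a (f^[j] y))⁻¹|
          ≤ (Ka : ℝ) / astar ^ 2 * (M ^ j * d) := by
        intro j
        have hax := ha0 (f^[j] x)
        have hay := ha0 (f^[j] y)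
        rw [inv_sub_inv hax.ne' hay.ne', abs_div, abs_mul,
          abs_of_pos hax, abs_of_pos hay]
        have hnum : |a (f^[j] y) - a (f^[j] x)| ≤ (Ka : ℝ) * (M ^ j * d) := by
          have h1 := ha_lip.dist_le_mul (f^[j] y) (f^[j] x)
          rw [Real.dist_eq] at h1
          refine h1.trans ?_
          refine mul_le_mul_of_nonneg_left ?_ Ka.2
          rw [dist_comm]
          exact hfi j x y
        have hden : astar ^ 2 ≤ a (f^[j] x) * a (f^[j] y) := by
          have := ha (f^[j] x); have := ha (f^[j] y); nlinarith
        calc |a (f^[j] y) - a (f^[j] x)| / (a (f^[j] x) * a (f^[j] y))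
            ≤ ((Ka : ℝ) * (M ^ j * d)) / astar ^ 2 := by
              apply div_le_div₀ (by positivity) hnum (by positivity) hden
          _ = (Ka : ℝ) / astar ^ 2 * (M ^ j * d) := by ring
      have hprod := prod_sub_prod_aux astar⁻¹
        (fun j => (a (f^[j] x))⁻¹) (fun j => (a (f^[j] y))⁻¹)
        (fun j => (Ka : ℝ) / astar ^ 2 * (M ^ j * d))
        (fun j => hinv0 _) (fun j => hinv0 _) (fun j => hinv_le _) (fun j => hinv_le _)
        hterm i
      refine hprod.trans ?_
      calc ∑ j ∈ Finset.range (i + 1), astar⁻¹ ^ i * ((Ka : ℝ) / astar ^ 2 * (M ^ j * d))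
          ≤ ∑ _j ∈ Finset.range (i + 1), astar⁻¹ ^ i * ((Ka : ℝ) / astar ^ 2 * (M ^ i * d)) := by
            refine Finset.sum_le_sum fun j hj => ?_
            have hji : j ≤ i := Nat.lt_succ_iff.mp (Finset.mem_range.mp hj)
            have : M ^ j ≤ M ^ i := pow_le_pow_right₀ hM1 hji
            gcongr
        _ = (i + 1 : ℝ) * (astar⁻¹ ^ i * ((Ka : ℝ) / astar ^ 2 * (M ^ i * d))) := by
            rw [Finset.sum_const, Finset.card_range, nsmul_eq_mul]; push_cast; ring
    -- assemble
    have hsplit : g i x - g i y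
        = (lam⁻¹) ^ i * ((b (f^[i] x) - b (f^[i] y)) * P + b (f^[i] y) * (P - Q)) := by
      simp only [hgdef]; ring
    have hli0 : (0:ℝ) ≤ (lam⁻¹) ^ i := by positivity
    have hrpow : r ^ i = lam⁻¹ ^ i * astar⁻¹ ^ i * M ^ i := by
      rw [hrdef, div_pow, mul_pow, div_eq_mul_inv, mul_inv, ← inv_pow, ← inv_pow]
      ring
    calc |g i x - g i y|
        = (lam⁻¹) ^ i * |(b (f^[i] x) - b (f^[i] y)) * P + b (f^[i] y) * (P - Q)| := by
          rw [hsplit, abs_mul, abs_of_nonneg hli0]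
      _ ≤ (lam⁻¹) ^ i * (((Kb : ℝ) * (M ^ i * d)) * (astar⁻¹ ^ (i + 1))
            + B * ((i + 1 : ℝ) * (astar⁻¹ ^ i * ((Ka : ℝ) / astar ^ 2 * (M ^ i * d))))) := by
          refine mul_le_mul_of_nonneg_left ?_ hli0
          refine (abs_add_le _ _).trans ?_
          rw [abs_mul, abs_mul]
          refine add_le_add ?_ ?_
          · refine mul_le_mul hbdiff ?_ (abs_nonneg _) (by positivity)
            rw [abs_of_nonneg (hP0 i x)]; exact hPle i x
          · exact mul_le_mul (hB _) hPQ (abs_nonneg _) hB0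
      _ ≤ c i * d := by
          have e1 : (lam⁻¹) ^ i * (((Kb : ℝ) * (M ^ i * d)) * (astar⁻¹ ^ (i + 1)))
              = (Kb : ℝ) / astar * (r ^ i * d) := by
            rw [hrpow, pow_succ]; ring
          have e2 : (lam⁻¹) ^ i * (B * ((i + 1 : ℝ)
                * (astar⁻¹ ^ i * ((Ka : ℝ) / astar ^ 2 * (M ^ i * d)))))
              = B * (Ka : ℝ) / astar ^ 2 * ((i + 1 : ℝ) * (r ^ i * d)) := by
            rw [hrpow]; ring
          rw [mul_add, e1, e2, hcdef, hCdef]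
          have hi1 : (1:ℝ) ≤ (i + 1 : ℝ) := by
            have := Nat.cast_nonneg (α := ℝ) i; linarith
          have h1 : (Kb : ℝ) / astar * (r ^ i * d)
              ≤ (Kb : ℝ) / astar * ((i + 1 : ℝ) * (r ^ i * d)) :=
            mul_le_mul_of_nonneg_left
              (le_mul_of_one_le_left (by positivity) hi1) (by positivity)
          have heq : ((Kb : ℝ) / astar + B * (Ka : ℝ) / astar ^ 2) * ((i + 1 : ℝ) * r ^ i) * d
              = (Kb : ℝ) / astar * ((i + 1 : ℝ) * (r ^ i * d))
                + B * (Ka : ℝ) / astar ^ 2 * ((i + 1 : ℝ) * (r ^ i * d)) := by ring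
          rw [heq]
          exact add_le_add h1 le_rfl
  -- summability of constants
  have hc_sum : Summable c := by
    have h1 : Summable (fun n : ℕ => (n : ℝ) * r ^ n) := by
      have := summable_pow_mul_geometric_of_norm_lt_one 1
        (r := r) (by rwa [Real.norm_eq_abs, abs_of_nonneg hr0])
      simpa using this
    have h2 : Summable (fun n : ℕ => r ^ n) := summable_geometric_of_lt_one hr0 hr1
    have h3 : Summable (fun n : ℕ => ((n : ℝ) + 1) * r ^ n) := by
      refine (h1.add h2).congr fun n => ?_
      ring
    exact (h3.mul_left C).congr fun n => rfl
  -- pointwise summability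
  have hg_bound : ∀ x i, |g i x| ≤ B * (lam⁻¹ * astar⁻¹) ^ i := by
    intro x i
    have h1 : |g i x| ≤ (lam⁻¹) ^ i * B * astar⁻¹ ^ (i + 1) := by
      simp only [hgdef]
      rw [abs_mul, abs_mul, abs_of_nonneg (by positivity : (0:ℝ) ≤ (lam⁻¹) ^ i),
        abs_of_nonneg (hP0 i x)]
      refine mul_le_mul (mul_le_mul_of_nonneg_left (hB _) (by positivity)) (hPle i x)
        (hP0 i x) (by positivity)
    refine h1.trans ?_
    rw [mul_pow]
    have hmono : astar⁻¹ ^ (i + 1) ≤ astar⁻¹ ^ i := by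
      apply pow_le_pow_of_le_one (by positivity) ?_ (by omega)
      rw [inv_le_one_iff₀]; right; exact hastar.le
    calc (lam⁻¹) ^ i * B * astar⁻¹ ^ (i + 1) ≤ (lam⁻¹) ^ i * B * astar⁻¹ ^ i := by
          gcongr
      _ = B * (lam⁻¹ ^ i * astar⁻¹ ^ i) := by ring
  have hq1 : lam⁻¹ * astar⁻¹ < 1 := by
    rw [← mul_inv]
    rw [inv_lt_one_iff₀]; right; exact hla1
  have hq0 : (0:ℝ) ≤ lam⁻¹ * astar⁻¹ := by positivity
  have hg_sum : ∀ x, Summable (fun i => g i x) := by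
    intro x
    refine Summable.of_norm_bounded ((summable_geometric_of_lt_one hq0 hq1).mul_left B) ?_
    intro i
    simpa [Real.norm_eq_abs] using hg_bound x i
  -- conclude
  refine ⟨Real.toNNReal (∑' i, c i), LipschitzWith.of_dist_le_mul fun x y => ?_⟩
  have htsum0 : 0 ≤ ∑' i, c i := tsum_nonneg hc0
  rw [Real.dist_eq, hS' x, hS' y, ← Summable.tsum_sub (hg_sum x) (hg_sum y),
    Real.coe_toNNReal _ htsum0]
  have habs_sum : Summable (fun i => |g i x - g i y|) :=
    Summable.of_nonneg_of_le (fun i => abs_nonneg _) (fun i => key i x y)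
      (hc_sum.mul_right (dist x y))
  calc |∑' i, (g i x - g i y)| ≤ ∑' i, |g i x - g i y| := by
        simpa [Real.norm_eq_abs] using norm_tsum_le_tsum_norm
          (f := fun i => g i x - g i y) (by simpa [Real.norm_eq_abs] using habs_sum)
    _ ≤ ∑' i, c i * dist x y :=
        Summable.tsum_le_tsum (fun i => key i x y) habs_sum (hc_sum.mul_right _)
    _ = (∑' i, c i) * dist x y := tsum_mul_right
end

section
/- Let λ > 1 and a* > 1 be real numbers, P a topological space, X a compact metric space, F : P × X → X a continuous map (write f_p := F(p, ·)), and a, b : P × X → ℝ continuous functions with a(p, x) ≥ a* for all (p, x). Then the function (p, x) ↦ S_p(x) := ∑_{i=0}^∞ λ^{−i} b(p, f_p^i(x)) ∏_{j=0}^{i} a(p, f_p^j(x))⁻¹ is continuous on P × X. -/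
/-- Joint continuity of the stable series in the parameter:
if `λ > 1`, `a* > 1`, `P` is a topological space, `X` a compact metric space,
`F : P × X → X` continuous (with `f_p = F(p, ·)`), `a, b : P × X → ℝ` continuous
with `a ≥ a*`, then `(p, x) ↦ S_p(x) = ∑_{i=0}^∞ λ^{−i} b(p, f_p^i(x))
∏_{j=0}^{i} a(p, f_p^j(x))⁻¹` is continuous on `P × X`. -/
theorem stable_series_continuous_in_parameter {P X : Type*}
    [TopologicalSpace P] [MetricSpace X] [CompactSpace X]
    (lam astar : ℝ) (hlam : 1 < lam) (hastar : 1 < astar)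
    (F : P × X → X) (hF : Continuous F)
    (a b : P × X → ℝ) (ha_cont : Continuous a) (hb_cont : Continuous b)
    (ha : ∀ p x, astar ≤ a (p, x))
    (S : P × X → ℝ)
    (hS : ∀ p x, S (p, x) = ∑' i,
      (lam⁻¹) ^ i * b (p, (fun y => F (p, y))^[i] x) *
        ∏ j ∈ Finset.range (i + 1), (a (p, (fun y => F (p, y))^[j] x))⁻¹) :
    Continuous S := by
  have hiter : ∀ n, Continuous fun q : P × X => (fun y => F (q.1, y))^[n] q.2 := by
    intro n
    induction n with
    | zero => simpa using continuous_snd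
    | succ n ih =>
      have : (fun q : P × X => (fun y => F (q.1, y))^[n+1] q.2)
          = fun q : P × X => F (q.1, (fun y => F (q.1, y))^[n] q.2) := by
        funext q; rw [Function.iterate_succ_apply']
      rw [this]
      exact hF.comp (continuous_fst.prodMk ih)
  set g : ℕ → P × X → ℝ := fun i q =>
    lam⁻¹ ^ i * b (q.1, (fun y => F (q.1, y))^[i] q.2) *
      ∏ j ∈ Finset.range (i+1), (a (q.1, (fun y => F (q.1, y))^[j] q.2))⁻¹ with hg
  have hgcont : ∀ i, Continuous (g i) := by
    intro i
    apply Continuous.mul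
    · exact (continuous_const.mul (hb_cont.comp (continuous_fst.prodMk (hiter i))))
    · apply continuous_finset_prod
      intro j _
      apply Continuous.inv₀
      · exact ha_cont.comp (continuous_fst.prodMk (hiter j))
      · intro q
        exact ne_of_gt (lt_of_lt_of_le (lt_trans zero_lt_one hastar) (ha _ _))
  have hSeq : ∀ q : P × X, S q = ∑' i, g i q := by
    intro ⟨p, x⟩; exact hS p x
  rw [continuous_iff_continuousAt]
  rintro ⟨p₀, x₀⟩
  -- bound b near p₀
  obtain ⟨C, hC⟩ : ∃ C, ∀ x : X, |b (p₀, x)| ≤ C := by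
    obtain ⟨C, hC⟩ := (isCompact_univ.image
      ((hb_cont.comp (continuous_const.prodMk continuous_id)).abs)).bddAbove
    exact ⟨C, fun x => hC ⟨x, Set.mem_univ x, rfl⟩⟩
  set M := C + 1 with hM
  have hV : IsOpen {q : P × X | |b q| < M} := isOpen_lt hb_cont.abs continuous_const
  have hsub : ({p₀} : Set P) ×ˢ (Set.univ : Set X) ⊆ {q : P × X | |b q| < M} := by
    rintro ⟨p, x⟩ ⟨hp, -⟩
    simp only [Set.mem_singleton_iff] at hp
    subst hp
    exact lt_of_le_of_lt (hC x) (by simp [hM])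
  obtain ⟨u, v, hu, hv, hpu, hxv, huv⟩ := generalized_tube_lemma isCompact_singleton
    isCompact_univ hV hsub
  have hp₀u : p₀ ∈ u := hpu rfl
  -- uniform bound on u ×ˢ univ
  have hbound : ∀ i (q : P × X), q ∈ u ×ˢ (Set.univ : Set X) → ‖g i q‖ ≤ M * (lam⁻¹) ^ i := by
    intro i q hq
    have hM0 : 0 < M := lt_of_le_of_lt (abs_nonneg _) (lt_of_le_of_lt (hC x₀) (by simp [hM]))
    have hl0 : (0:ℝ) ≤ lam⁻¹ := by positivity
    have hprod : ∀ (k : ℕ),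
        (0:ℝ) ≤ ∏ j ∈ Finset.range k, (a (q.1, (fun y => F (q.1, y))^[j] q.2))⁻¹ ∧
        ∏ j ∈ Finset.range k, (a (q.1, (fun y => F (q.1, y))^[j] q.2))⁻¹ ≤ 1 := by
      intro k
      constructor
      · apply Finset.prod_nonneg
        intro j _
        exact le_of_lt (inv_pos.mpr (lt_of_lt_of_le (lt_trans zero_lt_one hastar) (ha _ _)))
      · apply Finset.prod_le_one
        · intro j _
          exact le_of_lt (inv_pos.mpr (lt_of_lt_of_le (lt_trans zero_lt_one hastar) (ha _ _)))
        · intro j _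
          have h1 : (1:ℝ) ≤ a (q.1, (fun y => F (q.1, y))^[j] q.2) :=
            le_trans (le_of_lt hastar) (ha _ _)
          exact inv_le_one_of_one_le₀ h1
    have hbq : |b (q.1, (fun y => F (q.1, y))^[i] q.2)| ≤ M := by
      have : (q.1, (fun y => F (q.1, y))^[i] q.2) ∈ u ×ˢ v := ⟨hq.1, hxv (Set.mem_univ _)⟩
      exact le_of_lt (huv this)
    have := (hprod (i+1))
    calc ‖g i q‖ = lam⁻¹ ^ i * |b (q.1, (fun y => F (q.1, y))^[i] q.2)| *
          (∏ j ∈ Finset.range (i+1), (a (q.1, (fun y => F (q.1, y))^[j] q.2))⁻¹) := by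
            rw [hg]
            simp only [Real.norm_eq_abs, abs_mul]
            rw [abs_of_nonneg (pow_nonneg hl0 i), abs_of_nonneg this.1]
      _ ≤ lam⁻¹ ^ i * M * 1 := by
            apply mul_le_mul
            · exact mul_le_mul_of_nonneg_left hbq (pow_nonneg hl0 i)
            · exact this.2
            · exact this.1
            · positivity
      _ = M * lam⁻¹ ^ i := by ring
  have hsum : Summable (fun i => M * (lam⁻¹) ^ i) := by
    apply Summable.mul_left
    apply summable_geometric_of_lt_one (by positivity)
    exact inv_lt_one_of_one_lt₀ hlam
  have htu : TendstoUniformlyOn (fun (t : Finset ℕ) q => ∑ i ∈ t, g i q)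
      (fun q => ∑' i, g i q) Filter.atTop (u ×ˢ (Set.univ : Set X)) :=
    tendstoUniformlyOn_tsum hsum hbound
  have hcont : ContinuousOn (fun q => ∑' i, g i q) (u ×ˢ (Set.univ : Set X)) := by
    apply htu.continuousOn
    exact (Filter.Eventually.of_forall fun t =>
      (continuous_finset_sum t fun i _ => hgcont i).continuousOn).frequently
  have hcS : ContinuousOn S (u ×ˢ (Set.univ : Set X)) :=
    hcont.congr fun q _ => hSeq q
  exact hcS.continuousAt ((hu.prod isOpen_univ).mem_nhds ⟨hp₀u, Set.mem_univ _⟩)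
end

section
/- Let X be a measurable space and μ̃ a measure on X × ℝ (with the product σ-algebra, ℝ carrying the Borel σ-algebra) such that for every s ∈ ℝ the translation map (x, t) ↦ (x, t + s) is measure-preserving for μ̃. Define the measure ν on X by ν(A) := μ̃(A × [0, 1)). If ν is σ-finite, then μ̃ equals the product measure ν ⊗ Leb, where Leb denotes Lebesgue measure on ℝ. -/
open MeasureTheory

section Aux
open Set

lemma ico_meas_eq (ρ : Measure ℝ) [ρ.IsAddLeftInvariant] (a : ℝ) :
    ρ (Ico a (a + 1)) = ρ (Ico (0:ℝ) 1) := by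
  have := measure_preimage_add ρ a (Ico a (a+1))
  rw [← this]
  congr 1
  ext x
  simp [Set.mem_Ico]

lemma invariant_real_eq_smul (ρ : Measure ℝ) [ρ.IsAddLeftInvariant]
    (hc : ρ (Ico (0:ℝ) 1) ≠ ⊤) : ρ = ρ (Ico (0:ℝ) 1) • volume := by
  have hfin : IsFiniteMeasureOnCompacts ρ := by
    constructor
    intro K hK
    obtain ⟨n, hn⟩ : ∃ n : ℕ, K ⊆ Icc (-(n:ℝ)) n := by
      rcases (hK.isBounded.subset_closedBall 0) with ⟨r, hr⟩
      obtain ⟨n, hrn⟩ := exists_nat_ge r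
      exact ⟨n, fun x hx => by
        have := hr hx
        simp [Real.closedBall_eq_Icc] at this
        exact ⟨by linarith [this.1], by linarith [this.2]⟩⟩
    have hsub : Icc (-(n:ℝ)) n ⊆ ⋃ k ∈ Finset.range (2*n+1), Ico (-(n:ℝ)+k) (-(n:ℝ)+k+1) := by
      intro x hx
      simp only [Set.mem_iUnion, Finset.mem_range, Set.mem_Ico]
      have h0 : (0:ℝ) ≤ x + n := by linarith [hx.1]
      have hmnn : (0:ℤ) ≤ ⌊x + (n:ℝ)⌋ := Int.floor_nonneg.2 h0
      refine ⟨⌊x + (n:ℝ)⌋.toNat, ?_, ?_, ?_⟩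
      · have h2 : ⌊x + (n:ℝ)⌋ ≤ ⌊((2*n : ℕ) : ℝ)⌋ := Int.floor_mono (by push_cast; linarith [hx.2])
        rw [Int.floor_natCast] at h2
        omega
      · have h3 := Int.floor_le (x + (n:ℝ))
        have hcast : ((⌊x + (n:ℝ)⌋.toNat : ℕ) : ℝ) = (⌊x + (n:ℝ)⌋ : ℝ) := by
          exact_mod_cast Int.toNat_of_nonneg hmnn
        linarith
      · have h3 := Int.lt_floor_add_one (x + (n:ℝ))
        have hcast : ((⌊x + (n:ℝ)⌋.toNat : ℕ) : ℝ) = (⌊x + (n:ℝ)⌋ : ℝ) := by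
          exact_mod_cast Int.toNat_of_nonneg hmnn
        linarith
    calc ρ K ≤ ρ (⋃ k ∈ Finset.range (2*n+1), Ico (-(n:ℝ)+k) (-(n:ℝ)+k+1)) :=
          measure_mono (hn.trans hsub)
      _ ≤ ∑ k ∈ Finset.range (2*n+1), ρ (Ico (-(n:ℝ)+k) (-(n:ℝ)+k+1)) :=
          measure_biUnion_finset_le _ _
      _ = ∑ _k ∈ Finset.range (2*n+1), ρ (Ico (0:ℝ) 1) := by
          refine Finset.sum_congr rfl fun k _ => ico_meas_eq ρ _
      _ < ⊤ := by
          rw [Finset.sum_const, nsmul_eq_mul]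
          exact ENNReal.mul_lt_top (ENNReal.natCast_lt_top _) hc.lt_top
  have key := Measure.isAddLeftInvariant_eq_smul ρ volume
  have hval : ρ (Ico (0:ℝ) 1) = ((Measure.addHaarScalarFactor ρ volume : NNReal) : ENNReal) := by
    conv_lhs => rw [key]
    rw [Measure.smul_apply, Real.volume_Ico]
    simp
  rw [hval]
  conv_lhs => rw [key]
  ext s hs
  rw [Measure.smul_apply, Measure.smul_apply, ENNReal.smul_def]

end Aux

/-- A measure on `X × ℝ` invariant under all vertical translations
`(x, t) ↦ (x, t + s)` is the product of the base measure `ν(A) = μ̃(A × [0, 1))`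
with Lebesgue measure, provided `ν` is σ-finite. -/
theorem translation_invariant_measure_is_product {X : Type*} [MeasurableSpace X]
    (μ : Measure (X × ℝ))
    (hinv : ∀ s : ℝ, MeasurePreserving (fun p : X × ℝ => (p.1, p.2 + s)) μ μ)
    (ν : Measure X)
    (hν : ∀ A : Set X, MeasurableSet A → ν A = μ (A ×ˢ Set.Ico (0 : ℝ) 1))
    [SigmaFinite ν] :
    μ = ν.prod volume := by
  -- the fiber measure over a measurable base set
  have hrect_fin : ∀ A : Set X, MeasurableSet A → ν A ≠ ⊤ →
      ∀ B : Set ℝ, MeasurableSet B → μ (A ×ˢ B) = ν A * volume B := by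
    intro A hA hAfin B hB
    set ρ : Measure ℝ := (μ.restrict (A ×ˢ (Set.univ : Set ℝ))).map Prod.snd with hρ
    have hρapp : ∀ C : Set ℝ, MeasurableSet C → ρ C = μ (A ×ˢ C) := by
      intro C hC
      rw [hρ, Measure.map_apply measurable_snd hC,
        Measure.restrict_apply (measurable_snd hC)]
      congr 1
      ext p
      simp [Set.mem_prod, and_comm]
    have hρinv : ρ.IsAddLeftInvariant := by
      constructor
      intro c
      have hT : Measurable (fun p : X × ℝ => (p.1, p.2 + c)) := (hinv c).measurable
      have hres : (μ.restrict (A ×ˢ (Set.univ : Set ℝ))).map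
          (fun p : X × ℝ => (p.1, p.2 + c)) = μ.restrict (A ×ˢ (Set.univ : Set ℝ)) := by
        have hpre : (fun p : X × ℝ => (p.1, p.2 + c)) ⁻¹' (A ×ˢ (Set.univ : Set ℝ))
            = A ×ˢ (Set.univ : Set ℝ) := by
          ext p; simp [Set.mem_prod]
        have := Measure.restrict_map (μ := μ) hT (hA.prod MeasurableSet.univ)
        rw [(hinv c).map_eq, hpre] at this
        exact this.symm
      calc ρ.map (c + ·)
          = (μ.restrict (A ×ˢ (Set.univ : Set ℝ))).map ((c + ·) ∘ Prod.snd) := by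
            rw [hρ, Measure.map_map (measurable_const_add c) measurable_snd]
        _ = (μ.restrict (A ×ˢ (Set.univ : Set ℝ))).map
              (Prod.snd ∘ (fun p : X × ℝ => (p.1, p.2 + c))) := by
            congr 1; ext p; simp [add_comm]
        _ = ((μ.restrict (A ×ˢ (Set.univ : Set ℝ))).map
              (fun p : X × ℝ => (p.1, p.2 + c))).map Prod.snd := by
            rw [Measure.map_map measurable_snd hT]
        _ = ρ := by rw [hres, hρ]
    have hρc : ρ (Set.Ico (0:ℝ) 1) = ν A := by
      rw [hρapp _ measurableSet_Ico, hν A hA]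
    have := invariant_real_eq_smul ρ (by rw [hρc]; exact hAfin)
    rw [← hρapp B hB, this, hρc, Measure.smul_apply, smul_eq_mul]
  -- extend to all measurable base sets by σ-finiteness
  have hrect : ∀ A : Set X, MeasurableSet A → ∀ B : Set ℝ, MeasurableSet B →
      μ (A ×ˢ B) = ν A * volume B := by
    intro A hA B hB
    set D : ℕ → Set X := disjointed (spanningSets ν) with hD
    have hDmeas : ∀ n, MeasurableSet (D n) :=
      MeasurableSet.disjointed (measurableSet_spanningSets ν)
    have hDdisj : Pairwise (Function.onFun Disjoint D) := disjoint_disjointed _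
    have hDfin : ∀ n, ν (A ∩ D n) ≠ ⊤ := fun n =>
      ((measure_mono ((Set.inter_subset_right).trans (disjointed_subset _ n))).trans_lt
        (measure_spanningSets_lt_top ν n)).ne
    have hAU : A ×ˢ B = ⋃ n, (A ∩ D n) ×ˢ B := by
      rw [← Set.iUnion_prod_const, ← Set.inter_iUnion, iUnion_disjointed,
        iUnion_spanningSets, Set.inter_univ]
    have hA2 : A = ⋃ n, A ∩ D n := by
      rw [← Set.inter_iUnion, iUnion_disjointed, iUnion_spanningSets, Set.inter_univ]
    rw [hAU, measure_iUnion ?_ (fun n => ((hA.inter (hDmeas n)).prod hB))]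
    · have : ∀ n, μ ((A ∩ D n) ×ˢ B) = ν (A ∩ D n) * volume B := fun n =>
        hrect_fin _ (hA.inter (hDmeas n)) (hDfin n) B hB
      simp_rw [this]
      rw [ENNReal.tsum_mul_right]
      congr 1
      rw [← measure_iUnion (fun i j hij => ((hDdisj hij).mono
          Set.inter_subset_right Set.inter_subset_right))
        (fun n => hA.inter (hDmeas n)), ← hA2]
    · intro i j hij
      exact Set.disjoint_prod.2 (Or.inl ((hDdisj hij).mono
        Set.inter_subset_right Set.inter_subset_right))
  exact (Measure.prod_eq fun A B hA hB => hrect A hA B hB).symm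
end

section
/- Let X and Y be compact metric spaces with their Borel σ-algebras, T : X → X and T₀ : Y → Y Borel measurable maps, and h : X → Y a continuous surjection with h ∘ T = T₀ ∘ h. Assume: (i) there is a countable set C ⊆ X such that h restricted to X \ C is injective; (ii) T₀ has exactly one invariant Borel probability measure ν₀; (iii) ν₀ has no atoms. Then T has at most one invariant Borel probability measure. -/
open MeasureTheory

/-- Transfer of unique ergodicity through a semi-conjugacy which is
injective off a countable set: if `h : X → Y` is a continuous surjection with
`h ∘ T = T₀ ∘ h`, injective outside a countable set `C`, and `T₀` has a unique
invariant Borel probability measure `ν₀` which is atomless, then `T` has at most one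
invariant Borel probability measure. -/
theorem unique_ergodicity_transfers {X Y : Type*}
    [MetricSpace X] [CompactSpace X] [MeasurableSpace X] [BorelSpace X]
    [MetricSpace Y] [CompactSpace Y] [MeasurableSpace Y] [BorelSpace Y]
    (T : X → X) (hT : Measurable T) (T₀ : Y → Y) (hT₀ : Measurable T₀)
    (h : X → Y) (hh_cont : Continuous h) (hh_surj : Function.Surjective h)
    (hsemi : ∀ x, h (T x) = T₀ (h x))
    (C : Set X) (hC : C.Countable) (hinj : Set.InjOn h Cᶜ)
    (ν₀ : Measure Y) [IsProbabilityMeasure ν₀] (hν₀ : ν₀.map T₀ = ν₀)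
    (huniq : ∀ ρ : Measure Y, IsProbabilityMeasure ρ → ρ.map T₀ = ρ → ρ = ν₀)
    (hatomless : ∀ y : Y, ν₀ {y} = 0) :
    ∀ μ₁ μ₂ : Measure X, IsProbabilityMeasure μ₁ → μ₁.map T = μ₁ →
      IsProbabilityMeasure μ₂ → μ₂.map T = μ₂ → μ₁ = μ₂ := by
  have hh_meas : Measurable h := hh_cont.measurable
  set N : Set X := h ⁻¹' (h '' C) with hNdef
  have hCimg : (h '' C).Countable := hC.image h
  have hCimg_meas : MeasurableSet (h '' C) := hCimg.measurableSet
  have hNmeas : MeasurableSet N := hh_meas hCimg_meas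
  have hCN : C ⊆ N := fun x hx => Set.mem_preimage.mpr ⟨x, hx, rfl⟩
  haveI : NullSingletonClass ν₀ := ⟨hatomless⟩
  have hν₀C : ν₀ (h '' C) = 0 := hCimg.measure_zero ν₀
  -- the restriction of `h` to `Nᶜ` is an injective measurable map, hence a
  -- measurable embedding between standard Borel spaces
  have hSmeas : MeasurableSet Nᶜ := hNmeas.compl
  haveI : StandardBorelSpace ↥(Nᶜ) := hSmeas.standardBorel
  set e : ↥(Nᶜ) → Y := fun x => h x.val with hedef
  have he_meas : Measurable e := hh_meas.comp measurable_subtype_coe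
  have he_inj : Function.Injective e := by
    rintro ⟨a, ha⟩ ⟨b, hb⟩ hab
    exact Subtype.ext (hinj (fun hc => ha (hCN hc)) (fun hc => hb (hCN hc)) hab)
  have hemb : MeasurableEmbedding e := he_meas.measurableEmbedding he_inj
  -- key formula: any invariant probability measure is determined by `ν₀`
  have key : ∀ μ : Measure X, IsProbabilityMeasure μ → μ.map T = μ →
      ∀ A : Set X, MeasurableSet A → μ A = ν₀ (h '' (A ∩ Nᶜ)) := by
    intro μ hμp hμinv A hA
    have hmap : μ.map h = ν₀ := by
      have hinv0 : (μ.map h).map T₀ = μ.map h := by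
        rw [Measure.map_map hT₀ hh_meas]
        have hc : T₀ ∘ h = h ∘ T := funext fun x => (hsemi x).symm
        rw [hc, ← Measure.map_map hh_meas hT, hμinv]
      exact huniq _ (Measure.isProbabilityMeasure_map hh_meas.aemeasurable) hinv0
    have hμN : μ N = 0 := by
      have : μ N = (μ.map h) (h '' C) := by
        rw [Measure.map_apply hh_meas hCimg_meas]
      rw [this, hmap, hν₀C]
    -- measurability of the image
    have himg : h '' (A ∩ Nᶜ) = e '' (Subtype.val ⁻¹' A) := by
      ext y
      constructor
      · rintro ⟨x, ⟨hxA, hxS⟩, rfl⟩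
        exact ⟨⟨x, hxS⟩, hxA, rfl⟩
      · rintro ⟨⟨x, hxS⟩, hxA, rfl⟩
        exact ⟨x, ⟨hxA, hxS⟩, rfl⟩
    have himg_meas : MeasurableSet (h '' (A ∩ Nᶜ)) := by
      rw [himg]
      exact hemb.measurableSet_image.mpr (measurable_subtype_coe hA)
    -- sandwiching the preimage of the image
    have hsub1 : A ∩ Nᶜ ⊆ h ⁻¹' (h '' (A ∩ Nᶜ)) := Set.subset_preimage_image _ _
    have hsub2 : h ⁻¹' (h '' (A ∩ Nᶜ)) ⊆ (A ∩ Nᶜ) ∪ N := by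
      intro x hx
      rcases hx with ⟨a, ⟨haA, haS⟩, hax⟩
      by_cases hxN : x ∈ N
      · exact Or.inr hxN
      · left
        have : a = x := hinj (fun hc => haS (hCN hc)) (fun hc => hxN (hCN hc)) hax
        exact this ▸ ⟨haA, haS⟩
    have hpre : ν₀ (h '' (A ∩ Nᶜ)) = μ (h ⁻¹' (h '' (A ∩ Nᶜ))) := by
      rw [← hmap, Measure.map_apply hh_meas himg_meas]
    have h1 : μ (h ⁻¹' (h '' (A ∩ Nᶜ))) = μ (A ∩ Nᶜ) := by
      apply le_antisymm
      · calc μ (h ⁻¹' (h '' (A ∩ Nᶜ))) ≤ μ ((A ∩ Nᶜ) ∪ N) := measure_mono hsub2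
          _ ≤ μ (A ∩ Nᶜ) + μ N := measure_union_le _ _
          _ = μ (A ∩ Nᶜ) := by rw [hμN, add_zero]
      · exact measure_mono hsub1
    have h2 : μ (A ∩ Nᶜ) = μ A := by
      rw [← Set.diff_eq]
      exact measure_diff_null hμN
    rw [hpre, h1, h2]
  intro μ₁ μ₂ h₁p h₁i h₂p h₂i
  ext A hA
  rw [key μ₁ h₁p h₁i A hA, key μ₂ h₂p h₂i A hA]
end

section
/- Let a < b and c < d be real numbers, I = [a, b], J = [c, d]. Let T : I → I be a map, T₀ : J → J a map, and h : I → J a continuous, nondecreasing surjection with h(T(x)) = T₀(h(x)) for all x ∈ I. Let S ⊆ I be a set on which h is injective. Assume that every forward T₀-orbit tail is dense in J: for every y ∈ J and every N ∈ ℕ, the set {T₀^n(y) : n ≥ N} is dense in J. Then for every x ∈ I and every z ∈ I which is an accumulation point of S (every open interval containing z contains a point of S different from z), z belongs to the ω-limit set of x under T: for every ε > 0 and every N ∈ ℕ there exists n ≥ N with |T^n(x) − z| < ε. -/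
/-- Let `T : I → I`, `T₀ : J → J` with `I = [a,b]`, `J = [c,d]`,
`h : I → J` a continuous nondecreasing surjection semi-conjugating `T` to `T₀`,
injective on `S ⊆ I`. If every forward `T₀`-orbit tail is dense in `J`, then every
accumulation point `z` of `S` belongs to the ω-limit set of every point `x ∈ I`
under `T`. -/
theorem accumulation_points_in_omega_limit
    (a b c d : ℝ) (hab : a < b) (hcd : c < d)
    (T : ℝ → ℝ) (hT : Set.MapsTo T (Set.Icc a b) (Set.Icc a b))
    (T₀ : ℝ → ℝ) (hT₀ : Set.MapsTo T₀ (Set.Icc c d) (Set.Icc c d))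
    (h : ℝ → ℝ) (hcont : ContinuousOn h (Set.Icc a b))
    (hmono : MonotoneOn h (Set.Icc a b))
    (hsurj : h '' Set.Icc a b = Set.Icc c d)
    (hsemi : ∀ x ∈ Set.Icc a b, h (T x) = T₀ (h x))
    (S : Set ℝ) (hS : S ⊆ Set.Icc a b) (hinj : Set.InjOn h S)
    (hdense : ∀ y ∈ Set.Icc c d, ∀ N : ℕ, ∀ z ∈ Set.Icc c d, ∀ ε > (0 : ℝ),
      ∃ n ≥ N, |T₀^[n] y - z| < ε) :
    ∀ x ∈ Set.Icc a b, ∀ z ∈ Set.Icc a b,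
      (∀ u v : ℝ, u < z → z < v → ∃ s ∈ S, s ∈ Set.Ioo u v ∧ s ≠ z) →
      ∀ ε > (0 : ℝ), ∀ N : ℕ, ∃ n ≥ N, |T^[n] x - z| < ε := by
  intro x hx z hz hacc ε hε N
  -- h maps I into J
  have hmaps : ∀ w ∈ Set.Icc a b, h w ∈ Set.Icc c d := by
    intro w hw
    rw [← hsurj]; exact ⟨w, hw, rfl⟩
  -- iterated semiconjugacy
  have hiter : ∀ n : ℕ, T^[n] x ∈ Set.Icc a b ∧ h (T^[n] x) = T₀^[n] (h x) := by
    intro n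
    induction n with
    | zero => exact ⟨hx, rfl⟩
    | succ n ih =>
      rw [Function.iterate_succ_apply', Function.iterate_succ_apply']
      exact ⟨hT ih.1, by rw [hsemi _ ih.1, ih.2]⟩
  -- two distinct points of S inside (z-ε, z+ε)
  obtain ⟨s, hsS, hsI, hsz⟩ := hacc (z - ε) (z + ε) (by linarith) (by linarith)
  have key : ∃ s₁ s₂, s₁ ∈ S ∧ s₂ ∈ S ∧ s₁ < s₂ ∧ z - ε < s₁ ∧ s₂ < z + ε := by
    rcases lt_or_gt_of_ne hsz with hlt | hgt
    · obtain ⟨s', hs'S, hs'I, _⟩ := hacc s (z + ε) hlt (by linarith)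
      exact ⟨s, s', hsS, hs'S, hs'I.1, hsI.1, hs'I.2⟩
    · obtain ⟨s', hs'S, hs'I, _⟩ := hacc (z - ε) s (by linarith) hgt
      exact ⟨s', s, hs'S, hsS, hs'I.2, hs'I.1, hsI.2⟩
  obtain ⟨s₁, s₂, h₁S, h₂S, h₁₂, hl, hr⟩ := key
  have h₁I : s₁ ∈ Set.Icc a b := hS h₁S
  have h₂I : s₂ ∈ Set.Icc a b := hS h₂S
  have hy : h s₁ < h s₂ := by
    rcases lt_or_eq_of_le (hmono h₁I h₂I h₁₂.le) with hlt | heq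
    · exact hlt
    · exact absurd (hinj h₁S h₂S heq) h₁₂.ne
  set w := (h s₁ + h s₂) / 2 with hw
  obtain ⟨h1c, h1d⟩ := hmaps s₁ h₁I
  obtain ⟨h2c, h2d⟩ := hmaps s₂ h₂I
  have hwJ : w ∈ Set.Icc c d := ⟨by simp only [hw]; linarith, by simp only [hw]; linarith⟩
  obtain ⟨n, hnN, hclose⟩ := hdense (h x) (hmaps x hx) N w hwJ
    ((h s₂ - h s₁) / 2) (by linarith)
  refine ⟨n, hnN, ?_⟩
  have hTn : T^[n] x ∈ Set.Icc a b := (hiter n).1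
  have heq : h (T^[n] x) = T₀^[n] (h x) := (hiter n).2
  rw [← heq] at hclose
  rw [abs_lt] at hclose
  have hub : h s₁ < h (T^[n] x) ∧ h (T^[n] x) < h s₂ := by
    constructor <;> simp only [hw] at hclose <;> linarith [hclose.1, hclose.2]
  -- pull back through monotone h
  have hgt : s₁ < T^[n] x := by
    by_contra hc
    push_neg at hc
    exact absurd (hmono hTn h₁I hc) (not_le.mpr hub.1)
  have hlt : T^[n] x < s₂ := by
    by_contra hc
    push_neg at hc
    exact absurd (hmono h₂I hTn hc) (not_le.mpr hub.2)
  rw [abs_lt]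
  constructor <;> linarith
end

section
/- Let λ > 1, −λ < β ≤ 0 and α > 0 be real numbers, and let k : ℝ → ℝ be a continuously differentiable even function with k(t) = 0 for |t| ≥ 1, 0 ≤ k ≤ 1 everywhere, and k nonincreasing on [0, ∞). Define F : ℝ² → ℝ² by F(x, y) := ((λ + β·k(‖(x, y)‖/α))·x, λ⁻¹·y), where ‖·‖ is the Euclidean norm. Then F is a bijection of ℝ², and a homeomorphism of ℝ². -/
open Filter Set

/-- The local model of the perturbed pseudo-Anosov map,
`F(x, y) = ((λ + β·k(‖(x,y)‖/α))·x, λ⁻¹·y)` with `λ > 1`, `−λ < β ≤ 0`, `α > 0`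
and `k` a `C¹` even bump function supported in `[−1, 1]`, `0 ≤ k ≤ 1`,
nonincreasing on `[0, ∞)`, is a bijection of `ℝ²` and a homeomorphism. -/
theorem perturbed_saddle_is_homeomorphism
    (lam β α : ℝ) (hlam : 1 < lam) (hβ1 : -lam < β) (hβ2 : β ≤ 0) (hα : 0 < α)
    (k : ℝ → ℝ) (hk_diff : ContDiff ℝ 1 k) (hk_even : ∀ t, k (-t) = k t)
    (hk_supp : ∀ t, 1 ≤ |t| → k t = 0)
    (hk_nonneg : ∀ t, 0 ≤ k t) (hk_le : ∀ t, k t ≤ 1)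
    (hk_anti : AntitoneOn k (Set.Ici 0))
    (F : ℝ × ℝ → ℝ × ℝ)
    (hF : ∀ p : ℝ × ℝ,
      F p = ((lam + β * k (Real.sqrt (p.1 ^ 2 + p.2 ^ 2) / α)) * p.1, lam⁻¹ * p.2)) :
    Function.Bijective F ∧ ∃ H : (ℝ × ℝ) ≃ₜ (ℝ × ℝ), ∀ p, H p = F p := by
  have hF' : F = fun p : ℝ × ℝ =>
      ((lam + β * k (Real.sqrt (p.1 ^ 2 + p.2 ^ 2) / α)) * p.1, lam⁻¹ * p.2) := funext hF
  subst hF'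
  have hlam0 : (0:ℝ) < lam := by linarith
  -- the coefficient is positive
  have hc_pos : ∀ t : ℝ, 0 < lam + β * k t := by
    intro t
    nlinarith [hk_nonneg t, hk_le t]
  have hc_le : ∀ t : ℝ, lam + β * k t ≤ lam := by
    intro t
    nlinarith [hk_nonneg t]
  -- the one-dimensional map for fixed y
  set h : ℝ → ℝ → ℝ := fun y x => (lam + β * k (Real.sqrt (x ^ 2 + y ^ 2) / α)) * x with hh
  have h_odd : ∀ y x, h y (-x) = - h y x := by
    intro y x
    have hx2 : (-x) ^ 2 = x ^ 2 := by ring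
    simp only [hh, hx2]
    ring
  have h_mono : ∀ y, StrictMono (h y) := by
    intro y
    have key : ∀ x1 x2 : ℝ, 0 ≤ x1 → x1 < x2 → h y x1 < h y x2 := by
      intro x1 x2 hx1 hlt
      have hs : Real.sqrt (x1 ^ 2 + y ^ 2) ≤ Real.sqrt (x2 ^ 2 + y ^ 2) := by
        apply Real.sqrt_le_sqrt
        nlinarith
      have hk' : k (Real.sqrt (x2 ^ 2 + y ^ 2) / α) ≤ k (Real.sqrt (x1 ^ 2 + y ^ 2) / α) := by
        apply hk_anti
        · exact div_nonneg (Real.sqrt_nonneg _) hα.le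
        · exact div_nonneg (Real.sqrt_nonneg _) hα.le
        · gcongr
      have hcc : lam + β * k (Real.sqrt (x1 ^ 2 + y ^ 2) / α)
          ≤ lam + β * k (Real.sqrt (x2 ^ 2 + y ^ 2) / α) := by nlinarith
      calc h y x1 ≤ (lam + β * k (Real.sqrt (x2 ^ 2 + y ^ 2) / α)) * x1 :=
            mul_le_mul_of_nonneg_right hcc hx1
        _ < h y x2 := by
            exact mul_lt_mul_of_pos_left hlt (hc_pos _)
    intro x1 x2 hlt
    rcases le_or_gt 0 x1 with hx1 | hx1
    · exact key x1 x2 hx1 hlt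
    rcases le_or_gt x2 0 with hx2 | hx2
    · have := key (-x2) (-x1) (by linarith) (by linarith)
      rw [h_odd, h_odd] at this
      linarith
    · have h1 : h y x1 < 0 := by
        have := mul_pos (hc_pos (Real.sqrt (x1 ^ 2 + y ^ 2) / α)) (neg_pos.mpr hx1)
        simp only [hh]
        nlinarith
      have h2 : 0 < h y x2 := mul_pos (hc_pos _) hx2
      linarith
  have h_cont : ∀ y, Continuous (h y) := by
    intro y
    apply Continuous.mul
    · exact continuous_const.add (continuous_const.mul (hk_diff.continuous.comp
        ((Real.continuous_sqrt.comp (((continuous_id.pow 2).add continuous_const))).div_const α)))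
    · exact continuous_id
  -- values for large |x|
  have h_big : ∀ y x : ℝ, α ≤ x → h y x = lam * x := by
    intro y x hx
    have h1 : α ≤ Real.sqrt (x ^ 2 + y ^ 2) := by
      refine hx.trans ?_
      calc x = Real.sqrt (x ^ 2) := by
              rw [Real.sqrt_sq (by linarith)]
        _ ≤ _ := Real.sqrt_le_sqrt (by nlinarith)
    have : k (Real.sqrt (x ^ 2 + y ^ 2) / α) = 0 := by
      apply hk_supp
      rw [abs_of_nonneg (div_nonneg (Real.sqrt_nonneg _) hα.le)]
      rw [le_div_iff₀ hα]
      linarith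
    simp [hh, this]
  -- surjectivity of h y
  have h_surj : ∀ y u : ℝ, ∃ x, h y x = u := by
    intro y u
    set M : ℝ := |u| / lam + α with hM
    have hM0 : 0 < M := by positivity
    have hMα : α ≤ M := hM ▸ le_add_of_nonneg_left (by positivity)
    have hvalR : h y M = lam * M := h_big y M hMα
    have hvalL : h y (-M) = -(lam * M) := by rw [h_odd, hvalR]
    have hlamM : |u| ≤ lam * M := by
      rw [hM, mul_add, mul_div_cancel₀ _ (ne_of_gt hlam0)]
      nlinarith
    have hu : u ∈ Icc (h y (-M)) (h y M) := by
      rw [hvalL, hvalR]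
      constructor
      · linarith [neg_abs_le u]
      · linarith [le_abs_self u]
    have := intermediate_value_Icc (by linarith : -M ≤ M) (h_cont y).continuousOn hu
    obtain ⟨x, _, hx⟩ := this
    exact ⟨x, hx⟩
  -- bijectivity of F
  have hbij : Function.Bijective fun p : ℝ × ℝ =>
      ((lam + β * k (Real.sqrt (p.1 ^ 2 + p.2 ^ 2) / α)) * p.1, lam⁻¹ * p.2) := by
    constructor
    · rintro ⟨x1, y1⟩ ⟨x2, y2⟩ hpq
      simp only [Prod.mk.injEq] at hpq
      obtain ⟨h1, h2⟩ := hpq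
      have hy : y1 = y2 := by
        field_simp at h2
        exact h2
      subst hy
      have : h y1 x1 = h y1 x2 := h1
      have := (h_mono y1).injective this
      simp [this]
    · rintro ⟨u, v⟩
      obtain ⟨x, hx⟩ := h_surj (lam * v) u
      refine ⟨(x, lam * v), ?_⟩
      simp only [Prod.mk.injEq]
      constructor
      · exact hx
      · field_simp
  refine ⟨hbij, ?_⟩
  -- continuity
  have hcont : Continuous fun p : ℝ × ℝ =>
      ((lam + β * k (Real.sqrt (p.1 ^ 2 + p.2 ^ 2) / α)) * p.1, lam⁻¹ * p.2) := by
    apply Continuous.prodMk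
    · exact (continuous_const.add (continuous_const.mul (hk_diff.continuous.comp
        ((Real.continuous_sqrt.comp
          (((continuous_fst.pow 2)).add (continuous_snd.pow 2))).div_const α)))).mul
        continuous_fst
    · exact continuous_const.mul continuous_snd
  set G : ℝ × ℝ → ℝ × ℝ := fun p : ℝ × ℝ =>
    ((lam + β * k (Real.sqrt (p.1 ^ 2 + p.2 ^ 2) / α)) * p.1, lam⁻¹ * p.2) with hG
  -- properness : norm lower bound
  set m : ℝ := min (lam + β) lam⁻¹ with hm
  have hm0 : 0 < m := lt_min (by linarith) (by positivity)
  have hlow : ∀ p : ℝ × ℝ, m * ‖p‖ ≤ ‖G p‖ := by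
    intro ⟨x, y⟩
    have hnorm : ‖((x : ℝ), (y : ℝ))‖ = max |x| |y| := rfl
    have hnorm2 : ‖G (x, y)‖ =
        max |(lam + β * k (Real.sqrt (x ^ 2 + y ^ 2) / α)) * x| |lam⁻¹ * y| := rfl
    rw [hnorm, hnorm2]
    have hc1 : m * |x| ≤ |(lam + β * k (Real.sqrt (x ^ 2 + y ^ 2) / α)) * x| := by
      rw [abs_mul, abs_of_pos (hc_pos _)]
      apply mul_le_mul_of_nonneg_right _ (abs_nonneg x)
      calc m ≤ lam + β := min_le_left _ _
        _ ≤ _ := by nlinarith [hk_le (Real.sqrt (x ^ 2 + y ^ 2) / α)]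
    have hc2 : m * |y| ≤ |lam⁻¹ * y| := by
      rw [abs_mul, abs_of_pos (by positivity : (0:ℝ) < lam⁻¹)]
      exact mul_le_mul_of_nonneg_right (min_le_right _ _) (abs_nonneg y)
    rw [mul_max_of_nonneg _ _ hm0.le]
    exact max_le_max hc1 hc2
  have hproper : Tendsto G (cocompact (ℝ × ℝ)) (cocompact (ℝ × ℝ)) := by
    apply tendsto_cocompact_of_tendsto_dist_comp_atTop (0 : ℝ × ℝ)
    simp only [dist_zero_right]
    apply tendsto_atTop_mono hlow
    exact (tendsto_norm_cocompact_atTop).const_mul_atTop hm0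
  have hPM : IsProperMap G := isProperMap_iff_tendsto_cocompact.mpr ⟨hcont, hproper⟩
  have hclosed : IsClosedMap G := hPM.isClosedMap
  have hopen : IsOpenMap G := by
    intro U hU
    have : G '' Uᶜ = (G '' U)ᶜ := Set.image_compl_eq hbij
    have h2 : IsClosed (G '' Uᶜ) := hclosed _ hU.isClosed_compl
    rw [this] at h2
    simpa using h2.isOpen_compl
  exact ⟨Equiv.toHomeomorphOfContinuousOpen (Equiv.ofBijective G hbij) hcont hopen,
    fun p => rfl⟩
end

section
/- Let λ > 1, β ∈ (−λ, 1 − λ) and α > 0 be real numbers, and let k : ℝ → ℝ be a continuous even function with k(0) = 1, k(t) = 0 for |t| ≥ 1, 0 ≤ k ≤ 1 everywhere, and k nonincreasing on [0, ∞). Define h : [0, ∞) → ℝ by h(t) := (λ + β·k(t/α))·t and F : ℝ² → ℝ² by F(x, y) := ((λ + β·k(‖(x, y)‖/α))·x, λ⁻¹·y), where ‖·‖ is the Euclidean norm. Then: (i) the set {t ∈ (0, α] : h(t) = t} is nonempty and has a least element t₀, and t₀ < α; (ii) for every z ∈ ℝ² with 0 < ‖z‖ < t₀ one has ‖F(z)‖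 < ‖z‖; (iii) for every z ∈ ℝ² with ‖z‖ < t₀, the iterates F^n(z) converge to the origin as n → ∞. -/
/-- For the local model `F(x, y) = ((λ + β·k(‖(x,y)‖/α))·x, λ⁻¹·y)`
with `λ > 1`, `β ∈ (−λ, 1−λ)`, `α > 0` and `k` a continuous even unimodal bump
function (`k(0) = 1`, `k = 0` outside `[−1,1]`, `0 ≤ k ≤ 1`, nonincreasing on
`[0, ∞)`): (i) the equation `h(t) = t`, where `h(t) = (λ + β·k(t/α))·t`, has a least
solution `t₀` in `(0, α]`, and `t₀ < α`; (ii) `‖F(z)‖ < ‖z‖` for `0 < ‖z‖ < t₀`;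
(iii) every `z` with `‖z‖ < t₀` is attracted to the origin. -/
theorem attracting_fixed_point_local_model
    (lam β α : ℝ) (hlam : 1 < lam) (hβ : β ∈ Set.Ioo (-lam) (1 - lam)) (hα : 0 < α)
    (k : ℝ → ℝ) (hk_cont : Continuous k) (hk_even : ∀ t, k (-t) = k t) (hk0 : k 0 = 1)
    (hk_supp : ∀ t, 1 ≤ |t| → k t = 0)
    (hk_nonneg : ∀ t, 0 ≤ k t) (hk_le : ∀ t, k t ≤ 1)
    (hk_anti : AntitoneOn k (Set.Ici 0))
    (h : ℝ → ℝ) (hh : ∀ t, h t = (lam + β * k (t / α)) * t)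
    (F : ℝ × ℝ → ℝ × ℝ)
    (hF : ∀ p : ℝ × ℝ,
      F p = ((lam + β * k (Real.sqrt (p.1 ^ 2 + p.2 ^ 2) / α)) * p.1, lam⁻¹ * p.2))
    (nrm : ℝ × ℝ → ℝ) (hnrm : ∀ p : ℝ × ℝ, nrm p = Real.sqrt (p.1 ^ 2 + p.2 ^ 2)) :
    ∃ t₀ : ℝ, IsLeast {t ∈ Set.Ioc 0 α | h t = t} t₀ ∧ t₀ < α ∧
      (∀ z : ℝ × ℝ, 0 < nrm z → nrm z < t₀ → nrm (F z) < nrm z) ∧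
      (∀ z : ℝ × ℝ, nrm z < t₀ →
        Filter.Tendsto (fun m : ℕ => F^[m] z) Filter.atTop (nhds (0, 0))) := by
  obtain ⟨hβl, hβu⟩ := hβ
  have hβneg : β < 0 := by linarith
  set g : ℝ → ℝ := fun t => lam + β * k (t / α) with hg
  have hgpos : ∀ t, 0 < g t := by
    intro t
    have h1 : β * 1 ≤ β * k (t / α) := mul_le_mul_of_nonpos_left (hk_le _) hβneg.le
    simp only [hg]
    nlinarith
  have hgmono : ∀ s t : ℝ, 0 ≤ s → s ≤ t → g s ≤ g t := by
    intro s t hs hst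
    have hks : k (t / α) ≤ k (s / α) := by
      apply hk_anti (Set.mem_Ici.mpr (div_nonneg hs hα.le))
        (Set.mem_Ici.mpr (div_nonneg (hs.trans hst) hα.le))
      gcongr
    have := mul_le_mul_of_nonpos_left hks hβneg.le
    simp only [hg]
    linarith
  have hgcont : Continuous g := by
    apply continuous_const.add (continuous_const.mul (hk_cont.comp _))
    exact continuous_id.div_const α
  have hg0 : g 0 = lam + β := by simp [hg, hk0]
  have hgα : g α = lam := by
    simp [hg, div_self hα.ne', hk_supp 1 (by norm_num)]
  have hg0lt : g 0 < 1 := by rw [hg0]; linarith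
  -- IVT
  obtain ⟨c, hcmem, hgc⟩ : ∃ c ∈ Set.Icc 0 α, g c = 1 := by
    have := intermediate_value_Icc hα.le hgcont.continuousOn
      (show (1:ℝ) ∈ Set.Icc (g 0) (g α) by
        constructor
        · linarith
        · rw [hgα]; linarith)
    obtain ⟨c, hc, hgc⟩ := this
    exact ⟨c, hc, hgc⟩
  have hc0 : 0 < c := by
    rcases hcmem.1.lt_or_eq with h' | h'
    · exact h'
    · exfalso; rw [← h'] at hgc; linarith
  have hcα : c < α := by
    rcases hcmem.2.lt_or_eq with h' | h'
    · exact h'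
    · exfalso; rw [h'] at hgc; rw [hgα] at hgc; linarith
  -- the closed set T
  set T : Set ℝ := Set.Icc 0 α ∩ {t | g t = 1} with hT
  have hTclosed : IsClosed T := isClosed_Icc.inter (isClosed_eq hgcont continuous_const)
  have hTne : T.Nonempty := ⟨c, hcmem, hgc⟩
  have hTbdd : BddBelow T := ⟨0, fun x hx => hx.1.1⟩
  set t₀ : ℝ := sInf T with ht₀
  have ht₀T : t₀ ∈ T := hTclosed.csInf_mem hTne hTbdd
  have ht₀pos : 0 < t₀ := by
    rcases ht₀T.1.1.lt_or_eq with h' | h'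
    · exact h'
    · exfalso; have := ht₀T.2; rw [← h'] at this; simp only [Set.mem_setOf_eq] at this
      linarith
  have ht₀α : t₀ < α := lt_of_le_of_lt (csInf_le hTbdd ⟨hcmem, hgc⟩) hcα
  have hgt₀ : g t₀ = 1 := ht₀T.2
  -- g r < 1 for 0 ≤ r < t₀
  have hglt : ∀ r : ℝ, 0 ≤ r → r < t₀ → g r < 1 := by
    intro r hr hrt
    have hle : g r ≤ 1 := hgt₀ ▸ hgmono r t₀ hr hrt.le
    rcases hle.lt_or_eq with h' | h'
    · exact h'
    · exfalso
      have : r ∈ T := ⟨⟨hr, by linarith⟩, h'⟩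
      have := csInf_le hTbdd this
      linarith
  have hnrm_nonneg : ∀ p : ℝ × ℝ, 0 ≤ nrm p := fun p => (hnrm p) ▸ Real.sqrt_nonneg _
  have hinv_lt : lam⁻¹ < 1 := by
    rw [inv_lt_one_iff₀]; right; exact hlam
  have hinv_pos : 0 < lam⁻¹ := inv_pos.mpr (by linarith)
  -- key contraction lemma
  have key : ∀ w : ℝ × ℝ, nrm (F w) ≤ max (g (nrm w)) lam⁻¹ * nrm w := by
    intro w
    set b : ℝ := max (g (nrm w)) lam⁻¹ with hb
    have hb0 : 0 ≤ b := le_trans (hgpos (nrm w)).le (le_max_left _ _)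
    have ha2 : (g (nrm w)) ^ 2 ≤ b ^ 2 :=
      pow_le_pow_left₀ (hgpos (nrm w)).le (le_max_left _ _) 2
    have hl2 : (lam⁻¹) ^ 2 ≤ b ^ 2 :=
      pow_le_pow_left₀ hinv_pos.le (le_max_right _ _) 2
    have hFw : F w = ((g (nrm w)) * w.1, lam⁻¹ * w.2) := by
      rw [hF w, hnrm w]
    have hsum : (F w).1 ^ 2 + (F w).2 ^ 2 ≤ b ^ 2 * (w.1 ^ 2 + w.2 ^ 2) := by
      rw [hFw]
      have hexp : b ^ 2 * (w.1 ^ 2 + w.2 ^ 2) = b ^ 2 * w.1 ^ 2 + b ^ 2 * w.2 ^ 2 := by ring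
      simp only [mul_pow]
      rw [hexp]
      exact add_le_add (mul_le_mul_of_nonneg_right ha2 (sq_nonneg w.1))
        (mul_le_mul_of_nonneg_right hl2 (sq_nonneg w.2))
    calc nrm (F w) = Real.sqrt ((F w).1 ^ 2 + (F w).2 ^ 2) := hnrm _
      _ ≤ Real.sqrt (b ^ 2 * (w.1 ^ 2 + w.2 ^ 2)) := Real.sqrt_le_sqrt hsum
      _ = b * Real.sqrt (w.1 ^ 2 + w.2 ^ 2) := by
          rw [Real.sqrt_mul (sq_nonneg b), Real.sqrt_sq hb0]
      _ = b * nrm w := by rw [hnrm w]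
  refine ⟨t₀, ⟨⟨⟨ht₀pos, ht₀α.le⟩, ?_⟩, ?_⟩, ht₀α, ?_, ?_⟩
  · -- h t₀ = t₀
    rw [hh t₀]
    show g t₀ * t₀ = t₀
    rw [hgt₀, one_mul]
  · -- lower bound
    rintro t ⟨⟨ht0, htα⟩, hht⟩
    apply csInf_le hTbdd
    refine ⟨⟨ht0.le, htα⟩, ?_⟩
    show g t = 1
    rw [hh t] at hht
    have : g t * t = 1 * t := by rw [one_mul]; exact hht
    exact mul_right_cancel₀ ht0.ne' this
  · -- (ii)
    intro z h0 hlt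
    have hc1 : max (g (nrm z)) lam⁻¹ < 1 := max_lt (hglt _ h0.le hlt) hinv_lt
    calc nrm (F z) ≤ max (g (nrm z)) lam⁻¹ * nrm z := key z
      _ < 1 * nrm z := by
          exact mul_lt_mul_of_pos_right hc1 h0
      _ = nrm z := one_mul _
  · -- (iii)
    intro z hz
    set C : ℝ := max (g (nrm z)) lam⁻¹ with hC
    have hC1 : C < 1 := max_lt (hglt _ (hnrm_nonneg z) hz) hinv_lt
    have hC0 : 0 < C := lt_of_lt_of_le hinv_pos (le_max_right _ _)
    have hiter : ∀ n : ℕ, nrm (F^[n] z) ≤ C ^ n * nrm z := by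
      intro n
      induction n with
      | zero => simp
      | succ n ih =>
        have hpow1 : C ^ n ≤ 1 := pow_le_one₀ hC0.le hC1.le
        have hle : nrm (F^[n] z) ≤ nrm z := by
          calc nrm (F^[n] z) ≤ C ^ n * nrm z := ih
            _ ≤ 1 * nrm z := mul_le_mul_of_nonneg_right hpow1 (hnrm_nonneg z)
            _ = nrm z := one_mul _
        have hg' : g (nrm (F^[n] z)) ≤ C :=
          le_trans (hgmono _ _ (hnrm_nonneg _) hle) (le_max_left _ _)
        calc nrm (F^[n+1] z) = nrm (F (F^[n] z)) := by rw [Function.iterate_succ_apply']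
          _ ≤ max (g (nrm (F^[n] z))) lam⁻¹ * nrm (F^[n] z) := key _
          _ ≤ C * nrm (F^[n] z) :=
              mul_le_mul_of_nonneg_right (max_le hg' (le_max_right _ _)) (hnrm_nonneg _)
          _ ≤ C * (C ^ n * nrm z) := mul_le_mul_of_nonneg_left ih hC0.le
          _ = C ^ (n + 1) * nrm z := by ring
    have hnorm_le : ∀ p : ℝ × ℝ, ‖p‖ ≤ nrm p := by
      intro p
      rw [hnrm, Prod.norm_def]
      apply max_le
      · rw [Real.norm_eq_abs, ← Real.sqrt_sq_eq_abs]
        exact Real.sqrt_le_sqrt (by nlinarith [sq_nonneg p.2])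
      · rw [Real.norm_eq_abs, ← Real.sqrt_sq_eq_abs]
        exact Real.sqrt_le_sqrt (by nlinarith [sq_nonneg p.1])
    have htend0 : Filter.Tendsto (fun n : ℕ => C ^ n * nrm z) Filter.atTop (nhds 0) := by
      have := (tendsto_pow_atTop_nhds_zero_of_lt_one hC0.le hC1).mul_const (nrm z)
      simpa using this
    have : Filter.Tendsto (fun m : ℕ => F^[m] z) Filter.atTop (nhds 0) := by
      rw [tendsto_zero_iff_norm_tendsto_zero]
      exact squeeze_zero (fun n => norm_nonneg _)
        (fun n => le_trans (hnorm_le _) (hiter n)) htend0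
    simpa [Prod.mk_zero_zero] using this
end
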